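/- Let C be a Hom-finite, Krull–Schmidt, k-linear triangulated category, (X,Y) a maximal rigid torsion pair in C, and D a subcategory satisfying condition (RF) with D ⊆ X ⊆ (D[-1])⊥. Then the D-mutation (μ⁻¹(X;D), μ⁻¹(Y;D[1])) is again a maximal rigid torsion pair. -/

import Mathlib

open CategoryTheory CategoryTheory.Limits CategoryTheory.Pretriangulated

variable {C : Type*} [Category C] [Preadditive C] [HasZeroObject C]
  [HasShift C ℤ] [∀ n : ℤ, (shiftFunctor C n).Additive] [Pretriangulated C]

/-- `Hom(𝒳, 𝒴) = 0`. -/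
def homZero (𝒳 𝒴 : Set C) : Prop :=
  ∀ ⦃A B : C⦄, A ∈ 𝒳 → B ∈ 𝒴 → ∀ f : A ⟶ B, f = 0

/-- The shift `𝒳[n]` of a subcategory (closed under isomorphisms). -/
def shiftSet (𝒳 : Set C) (n : ℤ) : Set C :=
  {Z | ∃ A ∈ 𝒳, Nonempty ((A⟦n⟧) ≅ Z)}

/-- The class `𝒳 * 𝒴` of extensions. -/
def extClass (𝒳 𝒴 : Set C) : Set C :=
  {Z | ∃ (A B : C) (f : A ⟶ Z) (g : Z ⟶ B) (h : B ⟶ A⟦(1:ℤ)⟧),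
      A ∈ 𝒳 ∧ B ∈ 𝒴 ∧ Triangle.mk f g h ∈ distTriang C}

/-- A torsion pair: `Hom(𝒳,𝒴) = 0` and `C = 𝒳 * 𝒴`. -/
def IsTorsionPair (𝒳 𝒴 : Set C) : Prop :=
  homZero 𝒳 𝒴 ∧ ∀ Z : C, Z ∈ extClass 𝒳 𝒴

/-- A cotorsion pair: `Hom(𝒳,𝒲[1]) = 0` and `C = 𝒳 * 𝒲[1]`. -/
def IsCotorsionPair (𝒳 𝒲 : Set C) : Prop :=
  IsTorsionPair 𝒳 (shiftSet 𝒲 (1:ℤ))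

/-- Full subcategory closed under isomorphisms, finite direct sums and direct summands. -/
structure IsSubcat (𝒳 : Set C) : Prop where
  mem_of_iso : ∀ ⦃A B : C⦄, (A ≅ B) → A ∈ 𝒳 → B ∈ 𝒳
  biprod_mem : ∀ ⦃A B : C⦄, A ∈ 𝒳 → B ∈ 𝒳 → (A ⊞ B) ∈ 𝒳
  mem_of_biprod : ∀ ⦃A B : C⦄, (A ⊞ B) ∈ 𝒳 → A ∈ 𝒳 ∧ B ∈ 𝒳

/-- `⊥(𝒟[1]) = {M : Hom(M, 𝒟[1]) = 0}`. -/
def leftPerpShift (𝒟 : Set C) : Set C :=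
  {M : C | ∀ D ∈ 𝒟, ∀ f : M ⟶ (D⟦(1:ℤ)⟧), f = 0}

/-- `(𝒟[-1])⊥ = {M : Hom(𝒟[-1], M) = 0}`. -/
def shiftRightPerp (𝒟 : Set C) : Set C :=
  {M : C | ∀ D ∈ 𝒟, ∀ f : (D⟦(-1:ℤ)⟧) ⟶ M, f = 0}

/-- `A` admits a left `𝒟`-approximation. -/
def HasLeftApprox (𝒟 : Set C) (A : C) : Prop :=
  ∃ D ∈ 𝒟, ∃ f : A ⟶ D, ∀ D' ∈ 𝒟, ∀ g : A ⟶ D', ∃ h : D ⟶ D', f ≫ h = g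

/-- `A` admits a right `𝒟`-approximation. -/
def HasRightApprox (𝒟 : Set C) (A : C) : Prop :=
  ∃ D ∈ 𝒟, ∃ f : D ⟶ A, ∀ D' ∈ 𝒟, ∀ g : D' ⟶ A, ∃ h : D' ⟶ D, h ≫ f = g

/-- `μ⁻¹(ℳ;𝒟) = (𝒟 * ℳ[1]) ∩ ⊥(𝒟[1])`. -/
def muInv (ℳ 𝒟 : Set C) : Set C :=
  extClass 𝒟 (shiftSet ℳ (1:ℤ)) ∩ leftPerpShift 𝒟

/-- `μ(𝒩;𝒟) = (𝒩[-1] * 𝒟) ∩ (𝒟[-1])⊥`. -/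
def mu (𝒩 𝒟 : Set C) : Set C :=
  extClass (shiftSet 𝒩 (-1:ℤ)) 𝒟 ∩ shiftRightPerp 𝒟

/-- `(ℳ,𝒩)` is a `𝒟`-mutation pair. -/
def IsMutationPair (ℳ 𝒩 𝒟 : Set C) : Prop :=
  ℳ = mu 𝒩 𝒟 ∧ 𝒩 = muInv ℳ 𝒟

/-- Condition (RF): `𝒟` is functorially finite, rigid and `⊥(𝒟[1]) = (𝒟[-1])⊥`. -/
def RF (𝒟 : Set C) : Prop :=
  (∀ A : C, HasLeftApprox 𝒟 A) ∧ (∀ A : C, HasRightApprox 𝒟 A) ∧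
    homZero 𝒟 (shiftSet 𝒟 (1:ℤ)) ∧ leftPerpShift 𝒟 = shiftRightPerp 𝒟

/-- The Ext-injective objects of `𝒳`. -/
def extInj (𝒳 : Set C) : Set C :=
  {T : C | T ∈ 𝒳 ∧ ∀ A ∈ 𝒳, ∀ f : A ⟶ (T⟦(1:ℤ)⟧), f = 0}

/-- The Ext-projective objects of `𝒴`. -/
def extProj (𝒴 : Set C) : Set C :=
  {T : C | T ∈ 𝒴 ∧ ∀ B ∈ 𝒴, ∀ f : T ⟶ (B⟦(1:ℤ)⟧), f = 0}

/-- `𝒳` is maximal rigid. -/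
def IsMaximalRigid (𝒳 : Set C) : Prop :=
  homZero 𝒳 (shiftSet 𝒳 (1:ℤ)) ∧
  ∀ M : C, (∀ X₁ ∈ 𝒳, ∀ X₂ ∈ 𝒳, ∀ f : (M ⊞ X₁) ⟶ ((M ⊞ X₂)⟦(1:ℤ)⟧), f = 0) → M ∈ 𝒳


set_option linter.unusedSectionVars false
set_option maxHeartbeats 1000000

namespace Stmt14Aux

open ZeroObject

attribute [local simp] Triangle.mk Triangle.rotate


variable {C : Type*} [Category C] [Preadditive C] [HasZeroObject C]
  [HasShift C ℤ] [∀ n : ℤ, (shiftFunctor C n).Additive] [Pretriangulated C]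

/-- Transport a distinguished triangle along isomorphisms of its three objects. -/
lemma conj_distTriang {P : Triangle C} (hP : P ∈ distTriang C)
    {A B Z : C} (e₁ : P.obj₁ ≅ A) (e₂ : P.obj₂ ≅ B) (e₃ : P.obj₃ ≅ Z) :
    Triangle.mk (e₁.inv ≫ P.mor₁ ≫ e₂.hom) (e₂.inv ≫ P.mor₂ ≫ e₃.hom)
      (e₃.inv ≫ P.mor₃ ≫ (shiftFunctor C (1:ℤ)).map e₁.hom) ∈ distTriang C := by
  refine isomorphic_distinguished _ hP _ ?_
  refine Triangle.isoMk _ _ e₁.symm e₂.symm e₃.symm ?_ ?_ ?_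
  · dsimp; simp
  · dsimp; simp
  · dsimp; simp [← Functor.map_comp]

lemma zero_shift (n : ℤ) {A B : C} (h : ∀ f : A ⟶ B, f = 0) :
    ∀ f : A⟦n⟧ ⟶ B⟦n⟧, f = 0 := by
  intro f
  obtain ⟨g, rfl⟩ := (shiftFunctor C n).map_surjective f
  rw [h g, Functor.map_zero]

lemma zero_up {A B : C} (h : ∀ f : A⟦(-1:ℤ)⟧ ⟶ B, f = 0) :
    ∀ f : A ⟶ B⟦(1:ℤ)⟧, f = 0 := by
  intro f
  have h2 : (shiftFunctor C (-1:ℤ)).map f ≫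
      (shiftFunctorCompIsoId C (1:ℤ) (-1:ℤ) (by ring)).hom.app B = 0 := h _
  have h3 : (shiftFunctor C (-1:ℤ)).map f = 0 :=
    (cancel_mono ((shiftFunctorCompIsoId C (1:ℤ) (-1:ℤ) (by ring)).hom.app B)).1
      (by rw [h2, zero_comp])
  exact (shiftFunctor C (-1:ℤ)).map_injective (by rw [h3, Functor.map_zero])

lemma zero_down {A B : C} (h : ∀ f : A ⟶ B⟦(1:ℤ)⟧, f = 0) :
    ∀ f : A⟦(-1:ℤ)⟧ ⟶ B, f = 0 := by
  intro f
  have h2 : (shiftFunctorCompIsoId C (-1:ℤ) (1:ℤ) (by ring)).inv.app A ≫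
      (shiftFunctor C (1:ℤ)).map f = 0 := h _
  have h3 : (shiftFunctor C (1:ℤ)).map f = 0 :=
    (cancel_epi ((shiftFunctorCompIsoId C (-1:ℤ) (1:ℤ) (by ring)).inv.app A)).1
      (by rw [h2, comp_zero])
  exact (shiftFunctor C (1:ℤ)).map_injective (by rw [h3, Functor.map_zero])

lemma zero_conj {A A' B B' : C} (eA : A ≅ A') (eB : B ≅ B')
    (h : ∀ f : A ⟶ B, f = 0) : ∀ f : A' ⟶ B', f = 0 := by
  intro f
  have : eA.hom ≫ f ≫ eB.inv = 0 := h _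
  calc f = eA.inv ≫ (eA.hom ≫ f ≫ eB.inv) ≫ eB.hom := by simp
  _ = 0 := by rw [this]; simp


lemma isZero_shift_zero (n : ℤ) : IsZero ((0 : C)⟦n⟧) := by
  rw [IsZero.iff_id_eq_zero]
  have : (𝟙 (0:C)) = 0 := (isZero_zero C).eq_of_src _ _
  calc 𝟙 ((0:C)⟦n⟧) = (shiftFunctor C n).map (𝟙 0) := by
        rw [CategoryTheory.Functor.map_id]
  _ = 0 := by rw [this, Functor.map_zero]

variable {𝒳 𝒴 𝒟 : Set C}

lemma zero_mem (hS : IsSubcat 𝒳) {A : C} (hA : A ∈ 𝒳) : (0 : C) ∈ 𝒳 := by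
  have e : A ≅ A ⊞ (0:C) := by
    refine ⟨biprod.lift (𝟙 A) 0, biprod.fst, by simp, ?_⟩
    apply biprod.hom_ext
    · simp
    · apply (isZero_zero C).eq_of_tgt
  exact (hS.mem_of_biprod (hS.mem_of_iso e hA)).2

lemma zero_mem_shiftSet (hS : IsSubcat 𝒳) {A : C} (hA : A ∈ 𝒳) :
    (0:C) ∈ shiftSet 𝒳 (1:ℤ) :=
  ⟨0, zero_mem hS hA, ⟨(isZero_shift_zero 1).iso (isZero_zero C)⟩⟩

lemma shiftSet_mem {A : C} (hA : A ∈ 𝒳) : A⟦(1:ℤ)⟧ ∈ shiftSet 𝒳 (1:ℤ) :=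
  ⟨A, hA, ⟨Iso.refl _⟩⟩

lemma mem_extClass_of_triangle {S₁ S₂ : Set C} {T : Triangle C} (hT : T ∈ distTriang C)
    (h₁ : T.obj₁ ∈ S₁) (h₃ : T.obj₃ ∈ S₂) : T.obj₂ ∈ extClass S₁ S₂ :=
  ⟨T.obj₁, T.obj₃, T.mor₁, T.mor₂, T.mor₃, h₁, h₃, hT⟩

lemma retract_mem [IsIdempotentComplete C] (hS : IsSubcat 𝒳) {B Z : C} (hZ : Z ∈ 𝒳)
    (m : B ⟶ Z) (w : Z ⟶ B) (hmw : m ≫ w = 𝟙 B) : B ∈ 𝒳 := by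
  have key : (𝟙 Z - w ≫ m) ≫ (𝟙 Z - w ≫ m) = 𝟙 Z - w ≫ m := by
    have h0 : w ≫ m ≫ w ≫ m = w ≫ m := by
      rw [reassoc_of% hmw]
    simp only [Preadditive.comp_sub, Preadditive.sub_comp, Category.comp_id, Category.id_comp,
      Category.assoc, h0]
    abel
  obtain ⟨B', i', e', hie, hei⟩ := IsIdempotentComplete.idempotents_split Z (𝟙 Z - w ≫ m) key
  have hme : m ≫ e' = 0 := by
    have h1 : (m ≫ e') ≫ i' = 0 := by
      rw [Category.assoc, hei, Preadditive.comp_sub, Category.comp_id, ← Category.assoc, hmw,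
        Category.id_comp, sub_self]
    have : Mono i' := ⟨fun {W} f g hfg => by
      have := hfg =≫ e'
      simpa only [Category.assoc, hie, Category.comp_id] using this⟩
    exact (cancel_mono i').1 (by rw [h1, zero_comp])
  have hiw : i' ≫ w = 0 := by
    have h1 : i' ≫ w ≫ m = 0 := by
      rw [show w ≫ m = 𝟙 Z - e' ≫ i' from by rw [hei]; abel, Preadditive.comp_sub,
        Category.comp_id, ← Category.assoc, hie, Category.id_comp, sub_self]
    calc i' ≫ w = (i' ≫ w ≫ m) ≫ w := by
          rw [Category.assoc, Category.assoc, hmw, Category.comp_id]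
    _ = 0 := by rw [h1, zero_comp]
  have e : Z ≅ B ⊞ B' := by
    refine ⟨biprod.lift w e', biprod.desc m i', ?_, ?_⟩
    · rw [biprod.lift_desc, hei]; abel
    · apply biprod.hom_ext
      · rw [Category.assoc, biprod.lift_fst, Category.id_comp]
        apply biprod.hom_ext'
        · simp [hmw]
        · simp [hiw]
      · rw [Category.assoc, biprod.lift_snd, Category.id_comp]
        apply biprod.hom_ext'
        · simp [hme]
        · simp [hie]
  exact (hS.mem_of_biprod (hS.mem_of_iso e hZ)).1

/-- the product of two objects indexed by `Bool` is the biproduct. -/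
noncomputable def boolBiprodIso (g : Bool → C) : (∏ᶜ g) ≅ g false ⊞ g true := by
  refine ⟨biprod.lift (Pi.π g false) (Pi.π g true),
    Pi.lift (fun b => Bool.rec biprod.fst biprod.snd b), ?_, ?_⟩
  · apply Limits.Pi.hom_ext
    rintro (_|_) <;> simp
  · apply biprod.hom_ext <;> simp

lemma biprod_distTriang (T₁ T₂ : Triangle C) (h₁ : T₁ ∈ distTriang C)
    (h₂ : T₂ ∈ distTriang C) :
    ∃ (m₁ : T₁.obj₁ ⊞ T₂.obj₁ ⟶ T₁.obj₂ ⊞ T₂.obj₂)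
      (m₂ : T₁.obj₂ ⊞ T₂.obj₂ ⟶ T₁.obj₃ ⊞ T₂.obj₃)
      (m₃ : T₁.obj₃ ⊞ T₂.obj₃ ⟶ (T₁.obj₁ ⊞ T₂.obj₁)⟦(1:ℤ)⟧),
      Triangle.mk m₁ m₂ m₃ ∈ distTriang C := by
  let T : Bool → Triangle C := fun b => Bool.rec T₁ T₂ b
  have hT : ∀ b, T b ∈ distTriang C := by rintro (_|_) <;> assumption
  have hP := productTriangle_distinguished T hT
  have := conj_distTriang hP (boolBiprodIso (fun b => (T b).obj₁))
    (boolBiprodIso (fun b => (T b).obj₂)) (boolBiprodIso (fun b => (T b).obj₃))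
  exact ⟨_, _, _, this⟩

lemma extClass_biprod {S₁ S₂ : Set C} (hS₁ : IsSubcat S₁)
    (hS₂ : ∀ {A B : C}, A ∈ S₂ → B ∈ S₂ → (A ⊞ B) ∈ S₂)
    {Z₁ Z₂ : C} (hZ₁ : Z₁ ∈ extClass S₁ S₂) (hZ₂ : Z₂ ∈ extClass S₁ S₂) :
    (Z₁ ⊞ Z₂) ∈ extClass S₁ S₂ := by
  obtain ⟨A₁, B₁, f₁, g₁, k₁, hA₁, hB₁, hT₁⟩ := hZ₁
  obtain ⟨A₂, B₂, f₂, g₂, k₂, hA₂, hB₂, hT₂⟩ := hZ₂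
  obtain ⟨m₁, m₂, m₃, hT⟩ := biprod_distTriang (Triangle.mk f₁ g₁ k₁) (Triangle.mk f₂ g₂ k₂) hT₁ hT₂
  exact mem_extClass_of_triangle hT (hS₁.biprod_mem hA₁ hA₂) (hS₂ hB₁ hB₂)

/-- an additive functor preserves binary biproducts, as an explicit iso. -/
noncomputable def addMapBiprod (F : C ⥤ C) [F.Additive] (X Y : C) :
    F.obj (X ⊞ Y) ≅ F.obj X ⊞ F.obj Y := by
  refine ⟨biprod.lift (F.map biprod.fst) (F.map biprod.snd),
    biprod.desc (F.map biprod.inl) (F.map biprod.inr), ?_, ?_⟩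
  · rw [biprod.lift_desc, ← F.map_comp, ← F.map_comp, ← F.map_add, biprod.total, F.map_id]
  · apply biprod.hom_ext'
    · simp only [biprod.inl_desc_assoc]
      apply biprod.hom_ext <;> simp [← F.map_comp]
    · simp only [biprod.inr_desc_assoc]
      apply biprod.hom_ext <;> simp [← F.map_comp]

lemma shiftSet_biprod (hX : IsSubcat 𝒳) {A B : C} (hA : A ∈ shiftSet 𝒳 (1:ℤ))
    (hB : B ∈ shiftSet 𝒳 (1:ℤ)) : (A ⊞ B) ∈ shiftSet 𝒳 (1:ℤ) := by
  obtain ⟨Xa, hXa, ⟨ea⟩⟩ := hA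
  obtain ⟨Xb, hXb, ⟨eb⟩⟩ := hB
  exact ⟨Xa ⊞ Xb, hX.biprod_mem hXa hXb,
    ⟨(addMapBiprod (shiftFunctor C (1:ℤ)) Xa Xb) ≪≫ biprod.mapIso ea eb⟩⟩


lemma perp0_of_perp2 (hE : leftPerpShift 𝒟 = shiftRightPerp 𝒟) {N : C}
    (h : ∀ D' ∈ 𝒟, ∀ f : N ⟶ (D'⟦(1:ℤ)⟧)⟦(1:ℤ)⟧, f = 0) :
    ∀ D' ∈ 𝒟, ∀ f : D' ⟶ N, f = 0 := by
  have hN : N⟦(-1:ℤ)⟧ ∈ leftPerpShift 𝒟 := by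
    intro D' hD' f
    exact zero_down (h D' hD') f
  rw [hE] at hN
  intro D' hD' f
  exact (shiftFunctor C (-1:ℤ)).map_injective (by
    rw [hN D' hD' ((shiftFunctor C (-1:ℤ)).map f), Functor.map_zero])

lemma perp2_of_perp0 (hE : leftPerpShift 𝒟 = shiftRightPerp 𝒟) {N : C}
    (h : ∀ D' ∈ 𝒟, ∀ f : D' ⟶ N, f = 0) :
    ∀ D' ∈ 𝒟, ∀ f : N ⟶ (D'⟦(1:ℤ)⟧)⟦(1:ℤ)⟧, f = 0 := by
  have hN : N⟦(-1:ℤ)⟧ ∈ shiftRightPerp 𝒟 := by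
    intro D' hD' f
    obtain ⟨g, rfl⟩ := (shiftFunctor C (-1:ℤ)).map_surjective f
    rw [h D' hD' g, Functor.map_zero]
  rw [← hE] at hN
  intro D' hD' f
  exact zero_up (hN D' hD') f

lemma perp_apply {M : C} (hM : M ∈ leftPerpShift 𝒟) {B : C}
    (hB : B ∈ shiftSet 𝒟 (1:ℤ)) : ∀ f : M ⟶ B, f = 0 := by
  obtain ⟨D', hD', ⟨e⟩⟩ := hB
  exact zero_conj (Iso.refl M) e (hM D' hD')

lemma hom_to_shift_perp (hE : leftPerpShift 𝒟 = shiftRightPerp 𝒟) {M : C}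
    (hM : M ∈ leftPerpShift 𝒟) {A : C} (hA : A ∈ 𝒟) :
    ∀ f : A ⟶ M⟦(1:ℤ)⟧, f = 0 := by
  have hM' := hM
  rw [hE] at hM'
  exact zero_up (hM' A hA)

lemma rigid_apply (hR : homZero 𝒟 (shiftSet 𝒟 (1:ℤ))) {D₁ D₂ : C} (h₁ : D₁ ∈ 𝒟)
    (h₂ : D₂ ∈ 𝒟) : ∀ f : D₁ ⟶ D₂⟦(1:ℤ)⟧, f = 0 := fun f => hR h₁ (shiftSet_mem h₂) f

lemma D_sub_muInv (hX : IsSubcat 𝒳) (hRF : RF 𝒟) (hDX : 𝒟 ⊆ 𝒳) :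
    𝒟 ⊆ muInv 𝒳 𝒟 := by
  intro D' hD'
  constructor
  · exact mem_extClass_of_triangle (contractible_distinguished D') hD'
      (zero_mem_shiftSet hX (hDX hD'))
  · intro D'' hD'' f
    exact rigid_apply hRF.2.2.1 hD' hD'' f

lemma cone_approx (hX : IsSubcat 𝒳) (hRF : RF 𝒟) {X₀ : C} (hX₀ : X₀ ∈ 𝒳) :
    ∃ (D₀ : C) (_ : D₀ ∈ 𝒟) (f : X₀ ⟶ D₀) (T : C) (d : D₀ ⟶ T) (e : T ⟶ X₀⟦(1:ℤ)⟧),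
      (∀ D' ∈ 𝒟, ∀ g : X₀ ⟶ D', ∃ h : D₀ ⟶ D', f ≫ h = g) ∧
      (Triangle.mk f d e ∈ distTriang C) ∧ T ∈ muInv 𝒳 𝒟 := by
  obtain ⟨D₀, hD₀, f, happrox⟩ := hRF.1 X₀
  obtain ⟨T, d, e, hT⟩ := distinguished_cocone_triangle f
  have hrot := rot_of_distTriang _ hT
  have hef : e ≫ (shiftFunctor C (1:ℤ)).map f = 0 := by
    have h23 := comp_distTriang_mor_zero₂₃ _ hrot
    dsimp at h23
    erw [Preadditive.comp_neg, neg_eq_zero] at h23; exact h23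
  have hperp : T ∈ leftPerpShift 𝒟 := by
    intro D' hD' g
    have hdg : d ≫ g = 0 := rigid_apply hRF.2.2.1 hD₀ hD' (d ≫ g)
    obtain ⟨h, hh⟩ := Triangle.yoneda_exact₂ _ hrot g hdg
    obtain ⟨h₀, rfl⟩ := (shiftFunctor C (1:ℤ)).map_surjective h
    obtain ⟨σ, hσ⟩ := happrox D' hD' h₀
    erw [hh, ← hσ, Functor.map_comp, ← Category.assoc]
    dsimp
    rw [hef, zero_comp]
  exact ⟨D₀, hD₀, f, T, d, e, happrox, hT,
    mem_extClass_of_triangle hrot hD₀ (shiftSet_mem hX₀), hperp⟩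

lemma cocone_right_approx (hRF : RF 𝒟) (Z : C) :
    ∃ (D₀ : C) (_ : D₀ ∈ 𝒟) (i : D₀ ⟶ Z) (E : C) (π : Z ⟶ E) (δ : E ⟶ D₀⟦(1:ℤ)⟧),
      (∀ D' ∈ 𝒟, ∀ g : D' ⟶ Z, ∃ σ : D' ⟶ D₀, σ ≫ i = g) ∧
      (Triangle.mk i π δ ∈ distTriang C) ∧
      (∀ D' ∈ 𝒟, ∀ φ : D' ⟶ E, φ = 0) := by
  obtain ⟨D₀, hD₀, i, happrox⟩ := hRF.2.1 Z
  obtain ⟨E, π, δ, hT⟩ := distinguished_cocone_triangle i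
  refine ⟨D₀, hD₀, i, E, π, δ, happrox, hT, ?_⟩
  intro D' hD' φ
  have h1 : φ ≫ δ = 0 := rigid_apply hRF.2.2.1 hD' hD₀ _
  obtain ⟨ψ, hψ⟩ := Triangle.coyoneda_exact₃ _ hT φ h1
  obtain ⟨σ, hσ⟩ := happrox D' hD' ψ
  erw [hψ, ← hσ, Category.assoc]
  have h12 := comp_distTriang_mor_zero₁₂ _ hT
  dsimp at h12 ⊢
  erw [h12, comp_zero]

lemma part1 (hpair1 : homZero 𝒳 𝒴) (hRF : RF 𝒟) :
    homZero (muInv 𝒳 𝒟) (muInv 𝒴 (shiftSet 𝒟 (1:ℤ))) := by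
  rintro M N ⟨⟨A, B, f₁, f₂, f₃, hA, hB, hTM⟩, hMperp⟩
    ⟨⟨A', B', g₁, g₂, g₃, hA', hB', hTN⟩, hNperp⟩ f
  have hDN : ∀ D' ∈ 𝒟, ∀ u : D' ⟶ N, u = 0 := by
    apply perp0_of_perp2 hRF.2.2.2
    intro D' hD' u
    exact hNperp _ (shiftSet_mem hD') u
  have h1 : f₁ ≫ f = 0 := hDN A hA _
  obtain ⟨h, hh⟩ := Triangle.yoneda_exact₂ _ hTM f h1
  obtain ⟨X₀, hX₀, ⟨eB⟩⟩ := hB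
  obtain ⟨Y₀, hY₀, ⟨eB'⟩⟩ := hB'
  have h2 : h ≫ g₂ = 0 := by
    refine zero_conj eB eB' ?_ _
    exact zero_shift 1 (fun v => hpair1 hX₀ hY₀ v)
  obtain ⟨w, hw⟩ := Triangle.coyoneda_exact₂ _ hTN h h2
  have h3 : f₂ ≫ w = 0 := perp_apply hMperp hA' _
  erw [hh, hw, ← Category.assoc]
  dsimp at h3 ⊢
  erw [h3, zero_comp]

lemma part2 (hmax1 : homZero 𝒳 (shiftSet 𝒳 (1:ℤ))) (hRF : RF 𝒟) :
    homZero (muInv 𝒳 𝒟) (shiftSet (muInv 𝒳 𝒟) (1:ℤ)) := by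
  rintro M Bm ⟨⟨A, B, f₁, f₂, f₃, hA, hB, hTM⟩, hMperp⟩ ⟨M', hM', ⟨eM⟩⟩ u0
  suffices h : ∀ u : M ⟶ M'⟦(1:ℤ)⟧, u = 0 by
    have h0 := h (u0 ≫ eM.inv)
    calc u0 = (u0 ≫ eM.inv) ≫ eM.hom := by simp
    _ = 0 := by rw [h0, zero_comp]
  intro u
  obtain ⟨⟨A', B', g₁, g₂, g₃, hA', hB', hTM'⟩, hM'perp⟩ := hM'
  have h1 : f₁ ≫ u = 0 := hom_to_shift_perp hRF.2.2.2 hM'perp hA _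
  obtain ⟨v, hv⟩ := Triangle.yoneda_exact₂ _ hTM u h1
  obtain ⟨X₀, hX₀, ⟨eB⟩⟩ := hB
  obtain ⟨v₀, hv₀⟩ := (shiftFunctor C (1:ℤ)).map_surjective (eB.hom ≫ v)
  obtain ⟨X₁', hX₁', ⟨eB'⟩⟩ := hB'
  have h2 : v₀ ≫ g₂ = 0 := by
    refine zero_conj (Iso.refl X₀) eB' ?_ _
    exact fun w => hmax1 hX₀ (shiftSet_mem hX₁') w
  obtain ⟨w₀, hw₀⟩ := Triangle.coyoneda_exact₂ _ hTM' v₀ h2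
  have h3 : f₂ ≫ eB.inv ≫ (shiftFunctor C (1:ℤ)).map w₀ = 0 := hMperp A' hA' _
  have hveq : v = eB.inv ≫ (shiftFunctor C (1:ℤ)).map v₀ := by rw [hv₀]; exact (Iso.inv_hom_id_assoc eB v).symm
  erw [hv, hveq, hw₀, Functor.map_comp]
  dsimp at h3 ⊢
  erw [← Category.assoc, ← Category.assoc, Category.assoc f₂ eB.inv, h3, zero_comp]


section wrappers
variable {A B Z' W : C} {m₁ : A ⟶ B} {m₂ : B ⟶ Z'} {m₃ : Z' ⟶ A⟦(1:ℤ)⟧}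

lemma rot_mk (hT : Triangle.mk m₁ m₂ m₃ ∈ distTriang C) :
    Triangle.mk m₂ m₃ (-(shiftFunctor C (1:ℤ)).map m₁) ∈ distTriang C :=
  rot_of_distTriang _ hT

lemma yoneda₂' (hT : Triangle.mk m₁ m₂ m₃ ∈ distTriang C) (f : B ⟶ W) (hf : m₁ ≫ f = 0) :
    ∃ g : Z' ⟶ W, f = m₂ ≫ g := Triangle.yoneda_exact₂ _ hT f hf

lemma coyoneda₂' (hT : Triangle.mk m₁ m₂ m₃ ∈ distTriang C) (f : W ⟶ B) (hf : f ≫ m₂ = 0) :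
    ∃ g : W ⟶ A, f = g ≫ m₁ := Triangle.coyoneda_exact₂ _ hT f hf

lemma coyoneda₃' (hT : Triangle.mk m₁ m₂ m₃ ∈ distTriang C) (f : W ⟶ Z') (hf : f ≫ m₃ = 0) :
    ∃ g : W ⟶ B, f = g ≫ m₂ := Triangle.coyoneda_exact₃ _ hT f hf

lemma comp₁₂' (hT : Triangle.mk m₁ m₂ m₃ ∈ distTriang C) : m₁ ≫ m₂ = 0 :=
  comp_distTriang_mor_zero₁₂ _ hT

lemma comp₂₃' (hT : Triangle.mk m₁ m₂ m₃ ∈ distTriang C) : m₂ ≫ m₃ = 0 :=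
  comp_distTriang_mor_zero₂₃ _ hT

end wrappers

lemma conj_distTriang₂ {P : Triangle C} (hP : P ∈ distTriang C) {B : C} (e : P.obj₂ ≅ B) :
    Triangle.mk (P.mor₁ ≫ e.hom) (e.inv ≫ P.mor₂) P.mor₃ ∈ distTriang C := by
  refine isomorphic_distinguished _ hP _
    (Triangle.isoMk _ _ (Iso.refl _) e.symm (Iso.refl _) ?_ ?_ ?_) <;> dsimp <;> simp

lemma part4 [IsIdempotentComplete C] (hX : IsSubcat 𝒳) (hY : IsSubcat 𝒴) (hD : IsSubcat 𝒟)
    (hpair : IsTorsionPair 𝒳 𝒴) (hmax1 : homZero 𝒳 (shiftSet 𝒳 (1:ℤ)))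
    (hRF : RF 𝒟) (hDX : 𝒟 ⊆ 𝒳) (hXD : 𝒳 ⊆ shiftRightPerp 𝒟) (Z : C) :
    Z ∈ extClass (muInv 𝒳 𝒟) (muInv 𝒴 (shiftSet 𝒟 (1:ℤ))) := by
  obtain ⟨D₀, hD₀, i, E, π, δ, happZ, hTE, hDE⟩ := cocone_right_approx hRF Z
  obtain ⟨X₀, Y₀, a, b, c, hX₀, hY₀, hTor⟩ := hpair.2 (E⟦(-1:ℤ)⟧)
  -- triple rotation of the torsion triangle, with middle conjugated to `E`
  set ε : (E⟦(-1:ℤ)⟧)⟦(1:ℤ)⟧ ≅ E :=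
    (shiftFunctorCompIsoId C (-1:ℤ) (1:ℤ) (by ring)).app E with hεdef
  set α : X₀⟦(1:ℤ)⟧ ⟶ E :=
    (-(shiftFunctor C (1:ℤ)).map a) ≫ ε.hom with hαdef
  set β : E ⟶ Y₀⟦(1:ℤ)⟧ := ε.inv ≫ (-(shiftFunctor C (1:ℤ)).map b) with hβdef
  have hS : Triangle.mk α β (-(shiftFunctor C (1:ℤ)).map c) ∈ distTriang C := by
    have h3 := rot_mk (rot_mk (rot_mk hTor))
    exact conj_distTriang₂ h3 ε
  obtain ⟨D₁, hD₁, f, X₁, d, e, happX, hTX, hX₁⟩ := cone_approx hX hRF hX₀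
  have hTXrot := rot_mk hTX
  have hlift : (e ≫ α) ≫ δ = 0 := hX₁.2 D₀ hD₀ _
  obtain ⟨hdl, hhdl⟩ := coyoneda₃' hTE (e ≫ α) hlift
  have hM₀ : (D₀ ⊞ X₁) ∈ muInv 𝒳 𝒟 := by
    constructor
    · exact extClass_biprod hD (fun hA hB => shiftSet_biprod hX hA hB)
        (D_sub_muInv hX hRF hDX hD₀).1 hX₁.1
    · intro D' hD' g
      apply biprod.hom_ext'
      · rw [comp_zero, rigid_apply hRF.2.2.1 hD₀ hD' (biprod.inl ≫ g)]
      · rw [comp_zero, hX₁.2 D' hD' (biprod.inr ≫ g)]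
  have happM : ∀ M', M' ∈ muInv 𝒳 𝒟 → ∀ w : M' ⟶ Z,
      ∃ u : M' ⟶ D₀ ⊞ X₁, u ≫ biprod.desc i hdl = w := by
    intro M' hM' w
    obtain ⟨⟨A', B', g₁, g₂, g₃, hA', hB', hTM'⟩, hM'perp⟩ := hM'
    have h1 : g₁ ≫ (w ≫ π) = 0 := by
      rw [← Category.assoc]; exact hDE A' hA' _
    obtain ⟨φ₁, hφ₁⟩ := yoneda₂' hTM' (w ≫ π) h1
    obtain ⟨X₀', hX₀', ⟨eB'⟩⟩ := hB'
    have h2 : φ₁ ≫ β = 0 := by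
      refine zero_conj eB' (Iso.refl _) ?_ _
      exact zero_shift 1 (fun v => hpair.1 hX₀' hY₀ v)
    obtain ⟨ψ, hψ⟩ := coyoneda₂' hS φ₁ h2
    have h3 : (g₂ ≫ ψ) ≫ (-(shiftFunctor C (1:ℤ)).map f) = 0 := by
      rw [Preadditive.comp_neg, neg_eq_zero, Category.assoc]
      exact hM'perp D₁ hD₁ _
    obtain ⟨χ, hχ⟩ := coyoneda₃' hTXrot (g₂ ≫ ψ) h3
    have h4 : (w - χ ≫ hdl) ≫ π = 0 := by
      rw [Preadditive.sub_comp, Category.assoc, ← hhdl, hφ₁, hψ, ← Category.assoc, hχ,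
        Category.assoc, sub_self]
    obtain ⟨ω, hω⟩ := coyoneda₂' hTE (w - χ ≫ hdl) h4
    refine ⟨biprod.lift ω χ, ?_⟩
    rw [biprod.lift_desc, ← hω]
    abel
  obtain ⟨N₀, n, del0, hTN⟩ := distinguished_cocone_triangle (biprod.desc i hdl)
  have hXN : ∀ M', M' ∈ muInv 𝒳 𝒟 → ∀ v : M' ⟶ N₀, v = 0 := by
    intro M' hM' v
    have h1 : v ≫ del0 = 0 := part2 hmax1 hRF hM' (shiftSet_mem hM₀) _
    obtain ⟨vtl, hvtl⟩ := coyoneda₃' hTN v h1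
    obtain ⟨u, hu⟩ := happM M' hM' vtl
    rw [hvtl, ← hu, Category.assoc, comp₁₂' hTN, comp_zero]
  have hDN₀ : ∀ D' ∈ 𝒟, ∀ u : D' ⟶ N₀, u = 0 := fun D' hD' u =>
    hXN D' (D_sub_muInv hX hRF hDX hD') u
  have hN₀ : N₀ ∈ muInv 𝒴 (shiftSet 𝒟 (1:ℤ)) := by
    constructor
    · obtain ⟨D₂, hD₂, r₁, Y₁, sm, uu, happN, hTY, _⟩ :=
        cocone_right_approx hRF (N₀⟦(-1:ℤ)⟧)
      have hXY₁ : ∀ X'' ∈ 𝒳, ∀ φ : X'' ⟶ Y₁, φ = 0 := by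
        intro X'' hX'' φ
        have h1 : φ ≫ uu = 0 := by
          have hx : X'' ∈ leftPerpShift 𝒟 := by rw [hRF.2.2.2]; exact hXD hX''
          exact hx D₂ hD₂ _
        obtain ⟨φt, hφt⟩ := coyoneda₃' hTY φ h1
        obtain ⟨D'', hD'', f'', T'', d'', e'', happ'', hTX'', hT''⟩ := cone_approx hX hRF hX''
        set ε' : (N₀⟦(-1:ℤ)⟧)⟦(1:ℤ)⟧ ≅ N₀ :=
          (shiftFunctorCompIsoId C (-1:ℤ) (1:ℤ) (by ring)).app N₀ with hε'def
        set φh : X''⟦(1:ℤ)⟧ ⟶ N₀ := (shiftFunctor C (1:ℤ)).map φt ≫ ε'.hom with hφhdef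
        have h2 : e'' ≫ φh = 0 := hXN T'' hT'' _
        obtain ⟨ghat, hghat⟩ := yoneda₂' (rot_mk (rot_mk hTX'')) φh h2
        obtain ⟨g₀, hg₀⟩ := (shiftFunctor C (1:ℤ)).map_surjective (ghat ≫ ε'.inv)
        have hφt2 : φt = -(f'' ≫ g₀) := by
          apply (shiftFunctor C (1:ℤ)).map_injective
          rw [Functor.map_neg, Functor.map_comp, hg₀]
          have hup : (shiftFunctor C (1:ℤ)).map φt = φh ≫ ε'.inv := by
            rw [hφhdef, Category.assoc, Iso.hom_inv_id, Category.comp_id]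
          rw [hup, hghat, Preadditive.neg_comp, Preadditive.neg_comp, Category.assoc]
        obtain ⟨σ, hσ⟩ := happN D'' hD'' g₀
        rw [hφt, hφt2, ← hσ, Preadditive.neg_comp, Category.assoc, Category.assoc,
          comp₁₂' hTY, comp_zero, comp_zero, neg_zero]
      obtain ⟨X₃, Y₃, z, y, w₃, hX₃, hY₃, hT3'⟩ := hpair.2 Y₁
      have hz : z = 0 := hXY₁ X₃ hX₃ z
      obtain ⟨hret, hyret⟩ := yoneda₂' hT3' (𝟙 Y₁) (by rw [hz, zero_comp])
      have hY₁ : Y₁ ∈ 𝒴 := retract_mem hY hY₃ y hret hyret.symm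
      set ε' : (N₀⟦(-1:ℤ)⟧)⟦(1:ℤ)⟧ ≅ N₀ :=
        (shiftFunctorCompIsoId C (-1:ℤ) (1:ℤ) (by ring)).app N₀ with hε'def
      have hS' := conj_distTriang₂ (rot_mk (rot_mk (rot_mk hTY))) ε'
      exact mem_extClass_of_triangle hS' (shiftSet_mem hD₂) (shiftSet_mem hY₁)
    · intro B hB u
      obtain ⟨D', hD', ⟨eD⟩⟩ := hB
      exact zero_conj (Iso.refl N₀) ((shiftFunctor C (1:ℤ)).mapIso eD)
        (perp2_of_perp0 hRF.2.2.2 hDN₀ D' hD') u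
  exact mem_extClass_of_triangle hTN hM₀ hN₀

lemma part3 [IsIdempotentComplete C] (hX : IsSubcat 𝒳) (hD : IsSubcat 𝒟)
    (hmax : IsMaximalRigid 𝒳) (hRF : RF 𝒟) (hDX : 𝒟 ⊆ 𝒳) (hXD : 𝒳 ⊆ shiftRightPerp 𝒟)
    (M : C) (hM : ∀ X₁' ∈ muInv 𝒳 𝒟, ∀ X₂' ∈ muInv 𝒳 𝒟,
      ∀ g : (M ⊞ X₁') ⟶ ((M ⊞ X₂')⟦(1:ℤ)⟧), g = 0) : M ∈ muInv 𝒳 𝒟 := by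
  have hXleft : ∀ {X₀ : C}, X₀ ∈ 𝒳 → X₀ ∈ leftPerpShift 𝒟 := by
    intro X₀ h; rw [hRF.2.2.2]; exact hXD h
  have comp1 : ∀ T' ∈ muInv 𝒳 𝒟, ∀ u : M ⟶ T'⟦(1:ℤ)⟧, u = 0 := by
    intro T' hT' u
    have h := hM T' hT' T' hT' (biprod.fst ≫ u ≫ (shiftFunctor C (1:ℤ)).map biprod.inr)
    have h2 := congrArg
      (fun g => biprod.inl ≫ g ≫ (shiftFunctor C (1:ℤ)).map biprod.snd) h
    simpa [← Functor.map_comp] using h2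
  have comp2 : ∀ T ∈ muInv 𝒳 𝒟, ∀ u : T ⟶ M⟦(1:ℤ)⟧, u = 0 := by
    intro T hT u
    have h := hM T hT T hT (biprod.snd ≫ u ≫ (shiftFunctor C (1:ℤ)).map biprod.inl)
    have h2 := congrArg
      (fun g => biprod.inr ≫ g ≫ (shiftFunctor C (1:ℤ)).map biprod.fst) h
    simpa [← Functor.map_comp] using h2
  have compMM : ∀ u : M ⟶ M⟦(1:ℤ)⟧, u = 0 := by
    intro u
    obtain ⟨Dz, hDz, -⟩ := hRF.1 (0:C)
    have hDz' := D_sub_muInv hX hRF hDX hDz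
    have h := hM Dz hDz' Dz hDz' (biprod.fst ≫ u ≫ (shiftFunctor C (1:ℤ)).map biprod.inl)
    have h2 := congrArg
      (fun g => biprod.inl ≫ g ≫ (shiftFunctor C (1:ℤ)).map biprod.fst) h
    simpa [← Functor.map_comp] using h2
  have hMperp : M ∈ leftPerpShift 𝒟 := fun D' hD' u =>
    comp1 D' (D_sub_muInv hX hRF hDX hD') u
  -- right 𝒟-approximation of M and its "cocone"
  obtain ⟨D_M, hD_M, r, happr⟩ := hRF.2.1 M
  obtain ⟨L, l, h', hTL⟩ := distinguished_cocone_triangle₁ r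
  -- the inverse rotation of TL, with explicit morphisms
  set m' : M⟦(-1:ℤ)⟧ ⟶ L :=
    -((shiftFunctor C (-1:ℤ)).map h') ≫ (shiftEquiv C (1:ℤ)).unitIso.inv.app L with hm'def
  have hTL' : Triangle.mk m' l (r ≫ (shiftEquiv C (1:ℤ)).counitIso.inv.app M) ∈ distTriang C :=
    inv_rot_of_distTriang _ hTL
  have hrm' : (shiftFunctor C (-1:ℤ)).map r ≫ m' = 0 := by
    erw [hm'def, Preadditive.comp_neg, ← Category.assoc, ← Functor.map_comp, comp₂₃' hTL,
      Functor.map_zero, zero_comp, neg_zero]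
  -- L is in the perpendicular category
  have hLperp : ∀ D' ∈ 𝒟, ∀ u : L ⟶ D'⟦(1:ℤ)⟧, u = 0 := by
    have hLright : L ∈ shiftRightPerp 𝒟 := by
      intro D' hD' φ
      have h1 : φ ≫ l = 0 := by
        apply zero_down (B := D_M)
        exact fun g => rigid_apply hRF.2.2.1 hD' hD_M g
      obtain ⟨χ, hχ⟩ := coyoneda₂' hTL' φ h1
      obtain ⟨χ₁, hχ₁⟩ := (shiftFunctor C (-1:ℤ)).map_surjective χ
      obtain ⟨σ, hσ⟩ := happr D' hD' χ₁
      rw [hχ, ← hχ₁, ← hσ, Functor.map_comp, Category.assoc, hrm', comp_zero]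
    have := hLright
    rw [← hRF.2.2.2] at this
    exact this
  -- (i) Hom(L, L⟦1⟧) = 0
  have hi : ∀ u : L ⟶ L⟦(1:ℤ)⟧, u = 0 := by
    intro u
    have h1 : u ≫ (-(shiftFunctor C (1:ℤ)).map l) = 0 := by
      rw [Preadditive.comp_neg, neg_eq_zero]
      exact hLperp D_M hD_M _
    obtain ⟨u', hu'⟩ := coyoneda₃' (rot_mk hTL) u h1
    have h2 : m' ≫ u' = 0 := zero_down compMM _
    obtain ⟨g, hg⟩ := yoneda₂' hTL' u' h2
    obtain ⟨σ, hσ⟩ := happr D_M hD_M g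
    rw [hu', hg, ← hσ]
    simp only [Category.assoc]
    rw [comp₂₃' hTL]; simp
  -- (iii) Hom(L, X₂⟦1⟧) = 0 for X₂ ∈ 𝒳
  have hiii : ∀ X₂ ∈ 𝒳, ∀ u : L ⟶ X₂⟦(1:ℤ)⟧, u = 0 := by
    intro X₂ hX₂ u
    obtain ⟨D₂', hD₂', f₂, T₂, d₂, e₂, happ₂, hTX₂, hT₂⟩ := cone_approx hX hRF hX₂
    have hw0 : (m' ≫ u) ≫ (-(shiftFunctor C (1:ℤ)).map f₂) = 0 := by
      rw [Preadditive.comp_neg, neg_eq_zero, Category.assoc]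
      rw [hLperp D₂' hD₂' (u ≫ (shiftFunctor C (1:ℤ)).map f₂), comp_zero]
    obtain ⟨w', hw'⟩ := coyoneda₃' (rot_mk hTX₂) (m' ≫ u) hw0
    have hw'0 : w' = 0 := zero_down (comp1 T₂ hT₂) w'
    have hmu : m' ≫ u = 0 := by rw [hw', hw'0, zero_comp]
    obtain ⟨v, hv⟩ := yoneda₂' hTL' u hmu
    rw [hv, hmax.1 (hDX hD_M) (shiftSet_mem hX₂) v, comp_zero]
  -- (iv) Hom(X₁, L⟦1⟧) = 0 for X₁ ∈ 𝒳
  have hiv : ∀ X₁ ∈ 𝒳, ∀ v : X₁ ⟶ L⟦(1:ℤ)⟧, v = 0 := by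
    intro X₁ hX₁ v
    have h1 : v ≫ (-(shiftFunctor C (1:ℤ)).map l) = 0 := by
      rw [Preadditive.comp_neg, neg_eq_zero]
      exact hXleft hX₁ D_M hD_M _
    obtain ⟨v', hv'⟩ := coyoneda₃' (rot_mk hTL) v h1
    obtain ⟨D₁', hD₁', f₁, T₁, d₁, e₁, happ₁, hTX₁, hT₁⟩ := cone_approx hX hRF hX₁
    have h2 : e₁ ≫ (shiftFunctor C (1:ℤ)).map v' = 0 := comp2 T₁ hT₁ _
    obtain ⟨g₁h, hg₁h⟩ := yoneda₂' (rot_mk (rot_mk hTX₁)) ((shiftFunctor C (1:ℤ)).map v') h2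
    obtain ⟨g₁, hg₁⟩ := (shiftFunctor C (1:ℤ)).map_surjective g₁h
    have hv'2 : v' = -(f₁ ≫ g₁) := by
      apply (shiftFunctor C (1:ℤ)).map_injective
      rw [Functor.map_neg, Functor.map_comp, hg₁h, ← hg₁, Preadditive.neg_comp]
    obtain ⟨σ, hσ⟩ := happr D₁' hD₁' g₁
    rw [hv', hv'2, ← hσ, Preadditive.neg_comp]
    simp only [Category.assoc]
    rw [comp₂₃' hTL]; simp
  -- L is in 𝒳 by maximal rigidity
  have hL : L ∈ 𝒳 := by
    apply hmax.2
    intro X₁ hX₁ X₂ hX₂ g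
    have hcomp : g ≫ (addMapBiprod (shiftFunctor C (1:ℤ)) L X₂).hom = 0 := by
      apply biprod.hom_ext'
      · apply biprod.hom_ext
        · simp only [Category.assoc, comp_zero, zero_comp]
          rw [addMapBiprod]
          simp only [biprod.lift_fst]
          exact hi _
        · simp only [Category.assoc, comp_zero, zero_comp]
          rw [addMapBiprod]
          simp only [biprod.lift_snd]
          exact hiii X₂ hX₂ _
      · apply biprod.hom_ext
        · simp only [Category.assoc, comp_zero, zero_comp]
          rw [addMapBiprod]
          simp only [biprod.lift_fst]
          exact hiv X₁ hX₁ _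
        · simp only [Category.assoc, comp_zero, zero_comp]
          rw [addMapBiprod]
          simp only [biprod.lift_snd]
          exact hmax.1 hX₁ (shiftSet_mem hX₂) _
    have := congrArg (fun t => t ≫ (addMapBiprod (shiftFunctor C (1:ℤ)) L X₂).inv) hcomp
    simpa using this
  exact ⟨mem_extClass_of_triangle (rot_mk hTL) hD_M (shiftSet_mem hL), hMperp⟩

end Stmt14Aux

/-- the `𝒟`-mutation of a maximal rigid torsion pair is again a
maximal rigid torsion pair. -/
theorem stmt14 (k : Type*) [Field k] [Linear k C]
    [∀ A B : C, Module.Finite k (A ⟶ B)] [IsIdempotentComplete C]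
    (𝒳 𝒴 𝒟 : Set C) (hX : IsSubcat 𝒳) (hY : IsSubcat 𝒴) (hD : IsSubcat 𝒟)
    (hpair : IsTorsionPair 𝒳 𝒴)
    (hmax : IsMaximalRigid 𝒳)
    (hRF : RF 𝒟)
    (hDX : 𝒟 ⊆ 𝒳) (hXD : 𝒳 ⊆ shiftRightPerp 𝒟) :
    IsTorsionPair (muInv 𝒳 𝒟) (muInv 𝒴 (shiftSet 𝒟 (1:ℤ))) ∧
    IsMaximalRigid (muInv 𝒳 𝒟) := by
  refine ⟨⟨Stmt14Aux.part1 hpair.1 hRF, Stmt14Aux.part4 hX hY hD hpair hmax.1 hRF hDX hXD⟩,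
    Stmt14Aux.part2 hmax.1 hRF, fun M hM => Stmt14Aux.part3 hX hD hmax hRF hDX hXD M hM⟩
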